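/- arXiv:2002.07676 — 5 statements merged into one kernel-verified Lean document; each statement's English description precedes it below -/
import Mathlib

section
/- Let Y, A, Z be discrete random variables on a probability space, with Y taking values in {0,1} and A in {0,1}. Suppose (i) Y and A are conditionally independent given Z, (ii) Z and A are conditionally independent given Y, and (iii) for every value z of Z with positive probability, 0 < P(A=1|Z=z) < 1 and for every (a,z) with positive probability, 0 < P(Y=1|A=a,Z=z) < 1. Then A is independent of the pair (Z,Y). -/
open MeasureTheory ProbabilityTheory

section FairnessAux

variable {Ω : Type*} [MeasurableSpace Ω] {μ : Measure Ω} [IsProbabilityMeasure μ]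

lemma fairness_inter_eq_cond_mul {s : Set Ω} (hs : MeasurableSet s) (h0 : μ s ≠ 0)
    (t : Set Ω) : μ (s ∩ t) = μ[|s] t * μ s := by
  rw [cond_apply hs μ t, mul_comm ((μ s)⁻¹) (μ (s ∩ t)), mul_assoc,
    ENNReal.inv_mul_cancel h0 (measure_ne_top μ s), mul_one]

lemma fairness_ne_zero_of_cond_pos {s t : Set Ω} (hs : MeasurableSet s)
    (h : 0 < μ[|s] t) : μ (s ∩ t) ≠ 0 := by
  rw [cond_apply hs μ t] at h
  intro h0
  rw [h0, mul_zero] at h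
  exact lt_irrefl _ h

lemma fairness_compl_pos {ν : Measure Ω} [IsProbabilityMeasure ν] {t : Set Ω}
    (ht : MeasurableSet t) (h : ν t < 1) : 0 < ν tᶜ := by
  rw [prob_compl_eq_one_sub ht]
  exact tsub_pos_of_lt h

end FairnessAux

/-- The general fairness impossibility theorem. If Y and A are
conditionally independent given Z (calibration), Z and A are conditionally
independent given Y (equal error rates), and there is predictive uncertainty
(condition (iii)), then A is independent of the pair (Z, Y). -/
theorem fairness_impossibility
    {Ω γ : Type*} [MeasurableSpace Ω] (μ : Measure Ω) [IsProbabilityMeasure μ]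
    [MeasurableSpace γ] [MeasurableSingletonClass γ] [Countable γ]
    (Y A : Ω → Bool) (Z : Ω → γ)
    (hY : Measurable Y) (hA : Measurable A) (hZ : Measurable Z)
    -- (i) Y ⟂ A | Z
    (hYA_Z : ∀ z, μ (Z ⁻¹' {z}) ≠ 0 → ∀ y a,
      μ[|Z ⁻¹' {z}] (Y ⁻¹' {y} ∩ A ⁻¹' {a}) =
        μ[|Z ⁻¹' {z}] (Y ⁻¹' {y}) * μ[|Z ⁻¹' {z}] (A ⁻¹' {a}))
    -- (ii) Z ⟂ A | Y
    (hZA_Y : ∀ y, μ (Y ⁻¹' {y}) ≠ 0 → ∀ z a,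
      μ[|Y ⁻¹' {y}] (Z ⁻¹' {z} ∩ A ⁻¹' {a}) =
        μ[|Y ⁻¹' {y}] (Z ⁻¹' {z}) * μ[|Y ⁻¹' {y}] (A ⁻¹' {a}))
    -- (iii) 0 < P(A=1|Z=z) < 1 and 0 < P(Y=1|A=a,Z=z) < 1
    (hposA : ∀ z, μ (Z ⁻¹' {z}) ≠ 0 →
      0 < μ[|Z ⁻¹' {z}] (A ⁻¹' {true}) ∧ μ[|Z ⁻¹' {z}] (A ⁻¹' {true}) < 1)
    (hposY : ∀ a z, μ (A ⁻¹' {a} ∩ Z ⁻¹' {z}) ≠ 0 →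
      0 < μ[|A ⁻¹' {a} ∩ Z ⁻¹' {z}] (Y ⁻¹' {true}) ∧
        μ[|A ⁻¹' {a} ∩ Z ⁻¹' {z}] (Y ⁻¹' {true}) < 1) :
    -- A is independent of (Z, Y)
    ∀ a z y, μ (A ⁻¹' {a} ∩ (Z ⁻¹' {z} ∩ Y ⁻¹' {y})) =
      μ (A ⁻¹' {a}) * μ (Z ⁻¹' {z} ∩ Y ⁻¹' {y}) := by
  classical
  have mZ : ∀ z : γ, MeasurableSet (Z ⁻¹' {z}) := fun z => hZ (measurableSet_singleton z)
  have mYs : ∀ y : Bool, MeasurableSet (Y ⁻¹' {y}) := fun y => hY (measurableSet_singleton y)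
  have mAs : ∀ a : Bool, MeasurableSet (A ⁻¹' {a}) := fun a => hA (measurableSet_singleton a)
  have hAfc : A ⁻¹' {false} = (A ⁻¹' {true})ᶜ := by
    ext ω; cases h : A ω <;> simp [h]
  have hYfc : Y ⁻¹' {false} = (Y ⁻¹' {true})ᶜ := by
    ext ω; cases h : Y ω <;> simp [h]
  -- For z with positive measure: μ(A=a ∩ Z=z) ≠ 0 for both a
  have hAZ : ∀ z, μ (Z ⁻¹' {z}) ≠ 0 → ∀ a : Bool, μ (A ⁻¹' {a} ∩ Z ⁻¹' {z}) ≠ 0 := by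
    intro z hz a
    haveI := cond_isProbabilityMeasure (μ := μ) hz
    have h1 := hposA z hz
    have hpos : 0 < μ[|Z ⁻¹' {z}] (A ⁻¹' {a}) := by
      cases a
      · rw [hAfc]; exact fairness_compl_pos (mAs true) h1.2
      · exact h1.1
    have h2 := fairness_ne_zero_of_cond_pos (mZ z) hpos
    rwa [Set.inter_comm] at h2
  -- For z with positive measure: μ(Z=z ∩ Y=y) ≠ 0 for both y
  have hZY : ∀ z, μ (Z ⁻¹' {z}) ≠ 0 → ∀ y : Bool, μ (Z ⁻¹' {z} ∩ Y ⁻¹' {y}) ≠ 0 := by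
    intro z hz y
    have haz := hAZ z hz true
    have hmsaz : MeasurableSet (A ⁻¹' {true} ∩ Z ⁻¹' {z}) := (mAs true).inter (mZ z)
    haveI := cond_isProbabilityMeasure (μ := μ) haz
    have h1 := hposY true z haz
    have hpos : 0 < μ[|A ⁻¹' {true} ∩ Z ⁻¹' {z}] (Y ⁻¹' {y}) := by
      cases y
      · rw [hYfc]; exact fairness_compl_pos (mYs true) h1.2
      · exact h1.1
    have h2 := fairness_ne_zero_of_cond_pos hmsaz hpos
    intro h0
    apply h2
    refine measure_mono_null ?_ h0
    intro ω hω
    exact ⟨hω.1.2, hω.2⟩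
  -- key identity from (i)
  have condZ_eq : ∀ z, μ (Z ⁻¹' {z}) ≠ 0 → ∀ y a,
      μ (Z ⁻¹' {z} ∩ Y ⁻¹' {y}) * μ[|Z ⁻¹' {z}] (A ⁻¹' {a})
        = μ (A ⁻¹' {a} ∩ (Z ⁻¹' {z} ∩ Y ⁻¹' {y})) := by
    intro z hz y a
    have e1 : μ (Z ⁻¹' {z} ∩ (Y ⁻¹' {y} ∩ A ⁻¹' {a}))
        = μ[|Z ⁻¹' {z}] (Y ⁻¹' {y} ∩ A ⁻¹' {a}) * μ (Z ⁻¹' {z}) :=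
      fairness_inter_eq_cond_mul (mZ z) hz _
    rw [hYA_Z z hz y a] at e1
    have e2 : μ (Z ⁻¹' {z} ∩ Y ⁻¹' {y}) = μ[|Z ⁻¹' {z}] (Y ⁻¹' {y}) * μ (Z ⁻¹' {z}) :=
      fairness_inter_eq_cond_mul (mZ z) hz _
    have hset : A ⁻¹' {a} ∩ (Z ⁻¹' {z} ∩ Y ⁻¹' {y})
        = Z ⁻¹' {z} ∩ (Y ⁻¹' {y} ∩ A ⁻¹' {a}) := by
      ext ω; constructor
      · rintro ⟨ha, hz', hy⟩; exact ⟨hz', hy, ha⟩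
      · rintro ⟨hz', hy, ha⟩; exact ⟨ha, hz', hy⟩
    rw [hset, e1, e2]; ring
  -- key identity from (ii)
  have condY_eq : ∀ y, μ (Y ⁻¹' {y}) ≠ 0 → ∀ z a,
      μ (Z ⁻¹' {z} ∩ Y ⁻¹' {y}) * μ[|Y ⁻¹' {y}] (A ⁻¹' {a})
        = μ (A ⁻¹' {a} ∩ (Z ⁻¹' {z} ∩ Y ⁻¹' {y})) := by
    intro y hy z a
    have e1 : μ (Y ⁻¹' {y} ∩ (Z ⁻¹' {z} ∩ A ⁻¹' {a}))
        = μ[|Y ⁻¹' {y}] (Z ⁻¹' {z} ∩ A ⁻¹' {a}) * μ (Y ⁻¹' {y}) :=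
      fairness_inter_eq_cond_mul (mYs y) hy _
    rw [hZA_Y y hy z a] at e1
    have e2 : μ (Y ⁻¹' {y} ∩ Z ⁻¹' {z}) = μ[|Y ⁻¹' {y}] (Z ⁻¹' {z}) * μ (Y ⁻¹' {y}) :=
      fairness_inter_eq_cond_mul (mYs y) hy _
    have hset : A ⁻¹' {a} ∩ (Z ⁻¹' {z} ∩ Y ⁻¹' {y})
        = Y ⁻¹' {y} ∩ (Z ⁻¹' {z} ∩ A ⁻¹' {a}) := by
      ext ω; constructor
      · rintro ⟨ha, hz', hy'⟩; exact ⟨hy', hz', ha⟩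
      · rintro ⟨hy', hz', ha⟩; exact ⟨ha, hz', hy'⟩
    have hset2 : μ (Z ⁻¹' {z} ∩ Y ⁻¹' {y}) = μ (Y ⁻¹' {y} ∩ Z ⁻¹' {z}) := by
      rw [Set.inter_comm]
    rw [hset, hset2, e1, e2]; ring
  -- some z₀ with positive measure
  obtain ⟨z₀, hz₀⟩ : ∃ z, μ (Z ⁻¹' {z}) ≠ 0 := by
    by_contra h
    push_neg at h
    have h1 : μ (⋃ z : γ, Z ⁻¹' {z}) = 0 := measure_iUnion_null h
    have huniv : (⋃ z : γ, Z ⁻¹' {z}) = Set.univ := by ext ω; simp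
    rw [huniv, measure_univ] at h1
    exact one_ne_zero h1
  have hYpos : ∀ y : Bool, μ (Y ⁻¹' {y}) ≠ 0 := fun y h0 =>
    hZY z₀ hz₀ y (measure_mono_null Set.inter_subset_right h0)
  -- conditional probabilities of A given Z=z and given Y=y all agree
  have condEq : ∀ z, μ (Z ⁻¹' {z}) ≠ 0 → ∀ y a,
      μ[|Z ⁻¹' {z}] (A ⁻¹' {a}) = μ[|Y ⁻¹' {y}] (A ⁻¹' {a}) := by
    intro z hz y a
    have h := (condZ_eq z hz y a).trans (condY_eq y (hYpos y) z a).symm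
    exact (ENNReal.mul_right_inj (hZY z hz y) (measure_ne_top μ _)).mp h
  set c := μ[|Y ⁻¹' {true}] (A ⁻¹' {true}) with hc
  have hZc : ∀ z, μ (Z ⁻¹' {z}) ≠ 0 → μ[|Z ⁻¹' {z}] (A ⁻¹' {true}) = c :=
    fun z hz => condEq z hz true true
  have hYc : ∀ y : Bool, μ[|Y ⁻¹' {y}] (A ⁻¹' {true}) = c :=
    fun y => (condEq z₀ hz₀ y true).symm.trans (condEq z₀ hz₀ true true)
  -- μ (A=true) = c
  have hAc : μ (A ⁻¹' {true}) = c := by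
    have hsplit : μ (A ⁻¹' {true})
        = μ (A ⁻¹' {true} ∩ Y ⁻¹' {true}) + μ (A ⁻¹' {true} \ Y ⁻¹' {true}) :=
      (measure_inter_add_diff _ (mYs true)).symm
    have hdiff : A ⁻¹' {true} \ Y ⁻¹' {true} = A ⁻¹' {true} ∩ Y ⁻¹' {false} := by
      rw [hYfc]; rfl
    have e1 : μ (A ⁻¹' {true} ∩ Y ⁻¹' {true}) = c * μ (Y ⁻¹' {true}) := by
      rw [Set.inter_comm, fairness_inter_eq_cond_mul (mYs true) (hYpos true), hYc true]
    have e0 : μ (A ⁻¹' {true} ∩ Y ⁻¹' {false}) = c * μ (Y ⁻¹' {false}) := by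
      rw [Set.inter_comm, fairness_inter_eq_cond_mul (mYs false) (hYpos false), hYc false]
    have hsum : μ (Y ⁻¹' {true}) + μ (Y ⁻¹' {false}) = 1 := by
      rw [hYfc, measure_add_measure_compl (mYs true), measure_univ]
    rw [hsplit, hdiff, e1, e0, ← mul_add, hsum, mul_one]
  -- conclusion
  intro a z y
  rcases eq_or_ne (μ (Z ⁻¹' {z} ∩ Y ⁻¹' {y})) 0 with h0 | h0
  · rw [h0, mul_zero]
    exact measure_mono_null Set.inter_subset_right h0
  · have hz : μ (Z ⁻¹' {z}) ≠ 0 := fun hz0 => h0 (measure_mono_null Set.inter_subset_left hz0)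
    have htrue : μ (A ⁻¹' {true} ∩ (Z ⁻¹' {z} ∩ Y ⁻¹' {y}))
        = μ (A ⁻¹' {true}) * μ (Z ⁻¹' {z} ∩ Y ⁻¹' {y}) := by
      rw [← condZ_eq z hz y true, hZc z hz, hAc, mul_comm]
    cases a
    · have hsplitL : μ (A ⁻¹' {true} ∩ (Z ⁻¹' {z} ∩ Y ⁻¹' {y}))
          + μ (A ⁻¹' {false} ∩ (Z ⁻¹' {z} ∩ Y ⁻¹' {y})) = μ (Z ⁻¹' {z} ∩ Y ⁻¹' {y}) := by
        rw [Set.inter_comm (A ⁻¹' {true}), Set.inter_comm (A ⁻¹' {false}), hAfc,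
          ← Set.diff_eq]
        exact measure_inter_add_diff _ (mAs true)
      have hsplitR : μ (A ⁻¹' {true}) + μ (A ⁻¹' {false}) = 1 := by
        rw [hAfc, measure_add_measure_compl (mAs true), measure_univ]
      have hR : μ (A ⁻¹' {true}) * μ (Z ⁻¹' {z} ∩ Y ⁻¹' {y})
          + μ (A ⁻¹' {false}) * μ (Z ⁻¹' {z} ∩ Y ⁻¹' {y}) = μ (Z ⁻¹' {z} ∩ Y ⁻¹' {y}) := by
        rw [← add_mul, hsplitR, one_mul]
      have hcomb : μ (A ⁻¹' {true} ∩ (Z ⁻¹' {z} ∩ Y ⁻¹' {y}))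
          + μ (A ⁻¹' {false} ∩ (Z ⁻¹' {z} ∩ Y ⁻¹' {y}))
          = μ (A ⁻¹' {true} ∩ (Z ⁻¹' {z} ∩ Y ⁻¹' {y}))
            + μ (A ⁻¹' {false}) * μ (Z ⁻¹' {z} ∩ Y ⁻¹' {y}) := by
        rw [hsplitL, htrue, hR]
      exact (ENNReal.add_right_inj (measure_ne_top μ _)).mp hcomb
    · exact htrue
end

section
/- Let Y ∈ {0,1}, A ∈ {0,1}, and Z be discrete random variables such that Y and A are conditionally independent given Z, Z and A are conditionally independent given Y, and Var(Y | Z=z) > 0 for every value z of Z with positive probability. Then A is independent of the pair (Z,Y). -/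
open MeasureTheory ProbabilityTheory

/-- Variance of an a.e. constant function is zero. -/
lemma variance_zero_of_ae_const {Ω : Type*} [MeasurableSpace Ω] (ν : Measure Ω)
    [IsProbabilityMeasure ν] (f : Ω → ℝ) (hf : AEMeasurable f ν) (c : ℝ)
    (h : f =ᵐ[ν] fun _ => c) : variance f ν = 0 := by
  have hint : ν[f] = c := by
    rw [integral_congr_ae h, integral_const]
    simp
  have he : evariance f ν = 0 := by
    rw [evariance_eq_zero_iff hf, hint]
    exact h
  simp [ProbabilityTheory.variance, he]

/-- Cancellation in ENNReal. -/
lemma ennreal_mul_cancel {a b c : ENNReal} (h : a ≠ 0) (h2 : a ≠ ⊤)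
    (hh : a * b = a * c) : b = c := by
  have := congrArg (a⁻¹ * ·) hh
  simpa [← mul_assoc, ENNReal.inv_mul_cancel h h2] using this

/-- Refinement of the impossibility theorem: the positivity
condition is replaced by the weaker condition that Y cannot be perfectly
predicted from any realization of Z, i.e. Var(Y | Z = z) > 0 on the support
of Z. Then A is independent of the pair (Z, Y). -/
theorem fairness_impossibility_refined
    {Ω γ : Type*} [MeasurableSpace Ω] (μ : Measure Ω) [IsProbabilityMeasure μ]
    [MeasurableSpace γ] [MeasurableSingletonClass γ] [Countable γ]
    (Y A : Ω → Bool) (Z : Ω → γ)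
    (hY : Measurable Y) (hA : Measurable A) (hZ : Measurable Z)
    -- Y ⟂ A | Z
    (hYA_Z : ∀ z, μ (Z ⁻¹' {z}) ≠ 0 → ∀ y a,
      μ[|Z ⁻¹' {z}] (Y ⁻¹' {y} ∩ A ⁻¹' {a}) =
        μ[|Z ⁻¹' {z}] (Y ⁻¹' {y}) * μ[|Z ⁻¹' {z}] (A ⁻¹' {a}))
    -- Z ⟂ A | Y
    (hZA_Y : ∀ y, μ (Y ⁻¹' {y}) ≠ 0 → ∀ z a,
      μ[|Y ⁻¹' {y}] (Z ⁻¹' {z} ∩ A ⁻¹' {a}) =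
        μ[|Y ⁻¹' {y}] (Z ⁻¹' {z}) * μ[|Y ⁻¹' {y}] (A ⁻¹' {a}))
    -- Var(Y | Z = z) > 0 for every z in the support of Z
    (hvar : ∀ z, μ (Z ⁻¹' {z}) ≠ 0 →
      0 < variance (fun ω => if Y ω then (1 : ℝ) else 0) (μ[|Z ⁻¹' {z}])) :
    -- A is independent of (Z, Y)
    ∀ a z y, μ (A ⁻¹' {a} ∩ (Z ⁻¹' {z} ∩ Y ⁻¹' {y})) =
      μ (A ⁻¹' {a}) * μ (Z ⁻¹' {z} ∩ Y ⁻¹' {y}) := by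
  classical
  have hmZ : ∀ z : γ, MeasurableSet (Z ⁻¹' {z}) := fun z => hZ (measurableSet_singleton z)
  have hmY : ∀ y : Bool, MeasurableSet (Y ⁻¹' {y}) := fun y => hY (measurableSet_singleton y)
  -- Step 1: on the support of Z, each Y-fiber has positive conditional probability
  have hZY : ∀ z, μ (Z ⁻¹' {z}) ≠ 0 → ∀ y, μ (Z ⁻¹' {z} ∩ Y ⁻¹' {y}) ≠ 0 := by
    intro z hz y h0
    set ν := μ[|Z ⁻¹' {z}] with hν
    haveI : IsProbabilityMeasure ν := cond_isProbabilityMeasure hz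
    have hcond : ν (Y ⁻¹' {y}) = 0 := by
      rw [hν, cond_apply (hmZ z)]
      simp [h0]
    -- hence the indicator is a.e. constant under ν
    have hae : ∀ᵐ ω ∂ν, Y ω ≠ y := by
      have : ν {ω | Y ω = y} = 0 := hcond
      exact (ae_iff).2 (by simpa using this)
    have hconst : (fun ω => if Y ω then (1 : ℝ) else 0) =ᵐ[ν]
        fun _ => (if y = false then (1 : ℝ) else 0) := by
      filter_upwards [hae] with ω hω
      cases y with
      | false =>
        cases hb : Y ω with
        | false => exact absurd hb hω
        | true => simp [hb]
      | true =>
        cases hb : Y ω with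
        | false => simp [hb]
        | true => exact absurd hb hω
    have hmeas : AEMeasurable (fun ω => if Y ω then (1 : ℝ) else 0) ν := by
      refine Measurable.aemeasurable ?_
      exact Measurable.ite (hY (measurableSet_singleton true)) measurable_const measurable_const
    have hv0 : variance (fun ω => if Y ω then (1 : ℝ) else 0) ν = 0 :=
      variance_zero_of_ae_const ν _ hmeas _ hconst
    exact absurd hv0 (ne_of_gt (hvar z hz))
  -- there is some z0 in the support of Z
  obtain ⟨z0, hz0⟩ : ∃ z, μ (Z ⁻¹' {z}) ≠ 0 := by
    by_contra h
    push_neg at h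
    have : μ (⋃ z : γ, Z ⁻¹' {z}) = 0 := measure_iUnion_null h
    have huniv : (⋃ z : γ, Z ⁻¹' {z}) = Set.univ := by
      ext ω; simp
    rw [huniv] at this
    simp [measure_univ] at this
  -- both Y-fibers have positive probability
  have hYpos : ∀ y : Bool, μ (Y ⁻¹' {y}) ≠ 0 := by
    intro y h0
    exact hZY z0 hz0 y (le_antisymm (le_trans (measure_mono Set.inter_subset_right) h0.le)
      (zero_le))
  intro a z y
  -- key: conditional probability of A given Z=z equals that given Y=y, on joint support
  have key : ∀ z' y', μ (Z ⁻¹' {z'} ∩ Y ⁻¹' {y'}) ≠ 0 →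
      μ[|Z ⁻¹' {z'}] (A ⁻¹' {a}) = μ[|Y ⁻¹' {y'}] (A ⁻¹' {a}) := by
    intro z' y' hzy
    have hz' : μ (Z ⁻¹' {z'}) ≠ 0 := fun h => hzy (le_antisymm
      (le_trans (measure_mono Set.inter_subset_left) h.le) (zero_le))
    have hy'' : μ (Y ⁻¹' {y'}) ≠ 0 := fun h => hzy (le_antisymm
      (le_trans (measure_mono Set.inter_subset_right) h.le) (zero_le))
    -- compute the triple intersection two ways
    have e1 : μ (Z ⁻¹' {z'} ∩ (Y ⁻¹' {y'} ∩ A ⁻¹' {a})) =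
        μ (Z ⁻¹' {z'} ∩ Y ⁻¹' {y'}) * μ[|Z ⁻¹' {z'}] (A ⁻¹' {a}) := by
      rw [← cond_mul_eq_inter (hmZ z') _ μ, hYA_Z z' hz' y' a,
        mul_comm _ (μ (Z ⁻¹' {z'})), ← mul_assoc, mul_comm (μ (Z ⁻¹' {z'})) _,
        cond_mul_eq_inter (hmZ z') _ μ]
    have e2 : μ (Y ⁻¹' {y'} ∩ (Z ⁻¹' {z'} ∩ A ⁻¹' {a})) =
        μ (Z ⁻¹' {z'} ∩ Y ⁻¹' {y'}) * μ[|Y ⁻¹' {y'}] (A ⁻¹' {a}) := by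
      rw [← cond_mul_eq_inter (hmY y') _ μ, hZA_Y y' hy'' z' a,
        mul_comm _ (μ (Y ⁻¹' {y'})), ← mul_assoc, mul_comm (μ (Y ⁻¹' {y'})) _,
        cond_mul_eq_inter (hmY y') _ μ, Set.inter_comm]
    have hsets : Z ⁻¹' {z'} ∩ (Y ⁻¹' {y'} ∩ A ⁻¹' {a}) =
        Y ⁻¹' {y'} ∩ (Z ⁻¹' {z'} ∩ A ⁻¹' {a}) := by
      ext ω; simp; tauto
    rw [hsets, e2] at e1
    exact (ennreal_mul_cancel hzy (measure_ne_top μ _) e1.symm)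
  -- constant value c
  set c := μ[|Y ⁻¹' {true}] (A ⁻¹' {a}) with hc
  have hfz : ∀ z', μ (Z ⁻¹' {z'}) ≠ 0 → μ[|Z ⁻¹' {z'}] (A ⁻¹' {a}) = c :=
    fun z' hz' => key z' true (hZY z' hz' true)
  -- P(A=a) = c
  have hAc : μ (A ⁻¹' {a}) = c := by
    have hU : A ⁻¹' {a} = ⋃ z' : γ, Z ⁻¹' {z'} ∩ A ⁻¹' {a} := by
      ext ω; simp
    have hdisj : Pairwise (Function.onFun Disjoint fun z' : γ => Z ⁻¹' {z'} ∩ A ⁻¹' {a}) := by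
      intro i j hij
      simp only [Function.onFun, Set.disjoint_left]
      rintro ω ⟨hi, _⟩ ⟨hj, _⟩
      exact hij (by simp only [Set.mem_preimage, Set.mem_singleton_iff] at hi hj; rw [← hi, ← hj])
    have hmeas : ∀ i : γ, MeasurableSet ((fun z' : γ => Z ⁻¹' {z'} ∩ A ⁻¹' {a}) i) :=
      fun i => (hmZ i).inter (hA (measurableSet_singleton a))
    have hdecomp : μ (A ⁻¹' {a}) = ∑' z' : γ, μ (Z ⁻¹' {z'} ∩ A ⁻¹' {a}) := by
      conv_lhs => rw [hU]
      exact measure_iUnion hdisj hmeas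
    have hterm : ∀ z' : γ, μ (Z ⁻¹' {z'} ∩ A ⁻¹' {a}) = c * μ (Z ⁻¹' {z'}) := by
      intro z'
      by_cases hz' : μ (Z ⁻¹' {z'}) = 0
      · rw [hz', mul_zero]
        exact le_antisymm (le_trans (measure_mono Set.inter_subset_left) hz'.le) (zero_le)
      · rw [← cond_mul_eq_inter (hmZ z') _ μ, hfz z' hz']
    rw [hdecomp]
    simp_rw [hterm]
    rw [ENNReal.tsum_mul_left]
    have hdisj2 : Pairwise (Function.onFun Disjoint fun z' : γ => Z ⁻¹' {z'}) := by
      intro i j hij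
      simp only [Function.onFun, Set.disjoint_left]
      rintro ω hi hj
      exact hij (by simp only [Set.mem_preimage, Set.mem_singleton_iff] at hi hj; rw [← hi, ← hj])
    have : (∑' z' : γ, μ (Z ⁻¹' {z'})) = 1 := by
      rw [← measure_iUnion hdisj2 hmZ,
        show (⋃ z' : γ, Z ⁻¹' {z'}) = Set.univ from by ext ω; simp, measure_univ]
    rw [this, mul_one]
  -- final computation
  by_cases hzy : μ (Z ⁻¹' {z} ∩ Y ⁻¹' {y}) = 0
  · have hL : μ (A ⁻¹' {a} ∩ (Z ⁻¹' {z} ∩ Y ⁻¹' {y})) = 0 :=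
      le_antisymm (le_trans (measure_mono Set.inter_subset_right) hzy.le) (zero_le)
    rw [hL, hzy, mul_zero]
  · have hz' : μ (Z ⁻¹' {z}) ≠ 0 := fun h => hzy (le_antisymm
      (le_trans (measure_mono Set.inter_subset_left) h.le) (zero_le))
    have e1 : μ (Z ⁻¹' {z} ∩ (Y ⁻¹' {y} ∩ A ⁻¹' {a})) =
        μ (Z ⁻¹' {z} ∩ Y ⁻¹' {y}) * μ[|Z ⁻¹' {z}] (A ⁻¹' {a}) := by
      rw [← cond_mul_eq_inter (hmZ z) _ μ, hYA_Z z hz' y a,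
        mul_comm _ (μ (Z ⁻¹' {z})), ← mul_assoc, mul_comm (μ (Z ⁻¹' {z})) _,
        cond_mul_eq_inter (hmZ z) _ μ]
    have hsets : A ⁻¹' {a} ∩ (Z ⁻¹' {z} ∩ Y ⁻¹' {y}) =
        Z ⁻¹' {z} ∩ (Y ⁻¹' {y} ∩ A ⁻¹' {a}) := by
      ext ω; simp; tauto
    rw [hsets, e1, hfz z hz', ← hAc, mul_comm]
end

section
/- Let (Y, A) be discrete random variables with Y ∈ {0,1}, and let ŷ be a binary classifier. Suppose ŷ = 1{p̂ ≥ p̄} for some [0,1]-valued random variable p̂ that is calibrated within groups, i.e., E[Y | p̂, A] = p̂. Then for every group a with P(ŷ=1, A=a) > 0, the positive predictive value satisfies P(Y=1 | ŷ=1, A=a) ≥ p̄, and for every group a with P(ŷ=0, A=a) > 0, P(Y=1 | ŷ=0, A=a) < p̄ (assuming p̂ < p̄ on the event ŷ=0 with positive conditional probability mass strictly below p̄). -/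
open MeasureTheory ProbabilityTheory

/-- Necessity direction: if ŷ = 1{p̂ ≥ p̄} for a score p̂ calibrated
within groups, then each group's positive predictive value is at least p̄ and
each group's probability P(Y=1 | ŷ=0, A=a) is strictly below p̄. -/
theorem cutoff_of_calibrated_implies_ppv_npv
    {Ω α : Type*} [MeasurableSpace Ω] (μ : Measure Ω) [IsProbabilityMeasure μ]
    [MeasurableSpace α] [MeasurableSingletonClass α]
    (Y : Ω → ℝ) (hYm : Measurable Y) (hYval : ∀ ω, Y ω = 0 ∨ Y ω = 1)
    (A : Ω → α) (hAm : Measurable A)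
    (phat : Ω → ℝ) (hphatm : Measurable phat)
    (hrange : ∀ ω, phat ω ∈ Set.Icc (0 : ℝ) 1)
    -- calibration within groups: E[Y | p̂, A] = p̂
    (hcal : μ[Y | MeasurableSpace.comap (fun ω => (phat ω, A ω)) inferInstance]
      =ᵐ[μ] phat)
    (pbar : ℝ) (hpbar : pbar ∈ Set.Ioo (0 : ℝ) 1) :
    -- PPV ≥ p̄ for every group with P(ŷ=1, A=a) > 0
    (∀ a, μ ({ω | pbar ≤ phat ω} ∩ A ⁻¹' {a}) ≠ 0 →
      pbar ≤ (μ[|{ω | pbar ≤ phat ω} ∩ A ⁻¹' {a}] {ω | Y ω = 1}).toReal) ∧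
    -- P(Y=1 | ŷ=0, A=a) < p̄ for every group with P(ŷ=0, A=a) > 0
    (∀ a, μ ({ω | phat ω < pbar} ∩ A ⁻¹' {a}) ≠ 0 →
      (μ[|{ω | phat ω < pbar} ∩ A ⁻¹' {a}] {ω | Y ω = 1}).toReal < pbar) := by
  have hfm : Measurable (fun ω => (phat ω, A ω)) := hphatm.prodMk hAm
  have hm : MeasurableSpace.comap (fun ω => (phat ω, A ω)) inferInstance
      ≤ ‹MeasurableSpace Ω› := hfm.comap_le
  have hYint : Integrable Y μ := by
    refine (integrable_const (1 : ℝ)).mono' hYm.aestronglyMeasurable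
      (Filter.Eventually.of_forall fun ω => ?_)
    rcases hYval ω with h | h <;> simp [h]
  have hpint : Integrable phat μ := by
    refine (integrable_const (1 : ℝ)).mono' hphatm.aestronglyMeasurable
      (Filter.Eventually.of_forall fun ω => ?_)
    have := hrange ω
    rw [Real.norm_eq_abs, abs_le]
    constructor <;> linarith [this.1, this.2]
  have hT : MeasurableSet {ω | Y ω = 1} := hYm (measurableSet_singleton 1)
  -- key identity: for sets S measurable w.r.t. the comap σ-algebra,
  -- μ(S ∩ {Y=1}).toReal = ∫_S phat
  have key : ∀ S : Set Ω,
      MeasurableSet[MeasurableSpace.comap (fun ω => (phat ω, A ω)) inferInstance] S →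
      (μ (S ∩ {ω | Y ω = 1})).toReal = ∫ x in S, phat x ∂μ := by
    intro S hS
    have h1 : ∫ x in S, Y x ∂μ = ∫ x in S, phat x ∂μ := by
      rw [← setIntegral_condExp hm hYint hS]
      exact setIntegral_congr_ae (hm S hS) (hcal.mono fun ω h _ => h)
    have h2 : ∫ x in S, Y x ∂μ = (μ (S ∩ {ω | Y ω = 1})).toReal := by
      have heq : ∀ ω, Y ω = Set.indicator {ω | Y ω = 1} (fun _ => (1:ℝ)) ω := by
        intro ω
        rcases hYval ω with h | h
        · rw [Set.indicator_of_notMem] <;> simp [h]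
        · rw [Set.indicator_of_mem] <;> simp [h]
      calc ∫ x in S, Y x ∂μ
          = ∫ x in S, Set.indicator {ω | Y ω = 1} (fun _ => (1:ℝ)) x ∂μ :=
            integral_congr_ae (Filter.Eventually.of_forall fun ω => heq ω)
        _ = ∫ x in S ∩ {ω | Y ω = 1}, (1:ℝ) ∂μ := setIntegral_indicator hT
        _ = (μ (S ∩ {ω | Y ω = 1})).toReal := by simp; rfl
    rw [← h2, h1]
  constructor
  · intro a hne
    set S := {ω | pbar ≤ phat ω} ∩ A ⁻¹' {a} with hS_def
    have hSm : MeasurableSet[MeasurableSpace.comap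
        (fun ω => (phat ω, A ω)) inferInstance] S := by
      refine ⟨{p : ℝ × α | pbar ≤ p.1} ∩ Prod.snd ⁻¹' {a}, ?_, ?_⟩
      · exact (measurableSet_le measurable_const measurable_fst).inter
          (measurable_snd (measurableSet_singleton a))
      · ext ω; simp [S]
    have hSm0 : MeasurableSet S := hm S hSm
    have hSfin : μ S ≠ ⊤ := measure_ne_top μ S
    have hr : 0 < (μ S).toReal := ENNReal.toReal_pos hne hSfin
    have hlow : pbar * (μ S).toReal ≤ ∫ x in S, phat x ∂μ := by
      have : ∫ x in S, pbar ∂μ ≤ ∫ x in S, phat x ∂μ := by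
        refine setIntegral_mono_on (integrableOn_const ?_)
          hpint.integrableOn hSm0 (fun ω hω => hω.1)
        exact hSfin
      simp [mul_comm] at this; exact this
    have hcond : (μ[|S] {ω | Y ω = 1}).toReal
        = (μ S).toReal⁻¹ * (μ (S ∩ {ω | Y ω = 1})).toReal := by
      rw [cond_apply hSm0, ENNReal.toReal_mul, ENNReal.toReal_inv]
    rw [hcond, key S hSm, inv_mul_eq_div, le_div_iff₀ hr]
    linarith [hlow]
  · intro a hne
    set S := {ω | phat ω < pbar} ∩ A ⁻¹' {a} with hS_def
    have hSm : MeasurableSet[MeasurableSpace.comap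
        (fun ω => (phat ω, A ω)) inferInstance] S := by
      refine ⟨{p : ℝ × α | p.1 < pbar} ∩ Prod.snd ⁻¹' {a}, ?_, ?_⟩
      · exact (measurableSet_lt measurable_fst measurable_const).inter
          (measurable_snd (measurableSet_singleton a))
      · ext ω; simp [S]
    have hSm0 : MeasurableSet S := hm S hSm
    have hSfin : μ S ≠ ⊤ := measure_ne_top μ S
    have hr : 0 < (μ S).toReal := ENNReal.toReal_pos hne hSfin
    have hstrict : ∫ x in S, phat x ∂μ < pbar * (μ S).toReal := by
      have hpos : 0 < ∫ x in S, (pbar - phat x) ∂μ := by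
        rw [setIntegral_pos_iff_support_of_nonneg_ae]
        · refine lt_of_lt_of_le (b := μ S) ?_ (measure_mono ?_)
          · exact lt_of_le_of_ne zero_le (Ne.symm hne)
          · intro ω hω
            exact ⟨sub_ne_zero.2 (ne_of_gt hω.1), hω⟩
        · filter_upwards [ae_restrict_mem hSm0] with ω hω
          exact sub_nonneg.2 (le_of_lt hω.1)
        · exact ((integrable_const pbar).sub hpint).integrableOn
      have heq : ∫ x in S, (pbar - phat x) ∂μ
          = pbar * (μ S).toReal - ∫ x in S, phat x ∂μ := by
        rw [integral_sub (integrableOn_const (C := pbar) hSfin)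
          hpint.integrableOn]
        simp [mul_comm]
        exact Or.inl rfl
      rw [heq] at hpos
      linarith
    have hcond : (μ[|S] {ω | Y ω = 1}).toReal
        = (μ S).toReal⁻¹ * (μ (S ∩ {ω | Y ω = 1})).toReal := by
      rw [cond_apply hSm0, ENNReal.toReal_mul, ENNReal.toReal_inv]
    rw [hcond, key S hSm, inv_mul_eq_div, div_lt_iff₀ hr]
    linarith [hstrict]
end

section
/- Let (Y, A, ŷ) be discrete random variables with Y, ŷ ∈ {0,1}, and suppose that for each group a, P(Y=1 | ŷ=1, A=a) ≥ p̄ and P(Y=1 | ŷ=0, A=a) < p̄ (whenever the conditioning events have positive probability). Define p̂ = P(Y=1 | ŷ, A) (a function of ŷ and A). Then p̂ is calibrated, i.e., E[Y | p̂, A] = p̂, and ŷ = 1{p̂ ≥ p̄} almost surely. -/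
open MeasureTheory ProbabilityTheory

/-- Sufficiency direction: a classifier whose group-specific PPV
is at least p̄ and whose group-specific P(Y=1 | ŷ=0, A=a) is below p̄ can be
realized as the cutoff rule at p̄ applied to the calibrated two-valued-per-group
score p̂(ŷ, A) = P(Y=1 | ŷ, A). -/
theorem ppv_npv_implies_cutoff_of_calibrated
    {Ω α : Type*} [MeasurableSpace Ω] (μ : Measure Ω) [IsProbabilityMeasure μ]
    [MeasurableSpace α] [MeasurableSingletonClass α] [Countable α]
    (Y yhat : Ω → ℝ) (hYm : Measurable Y) (hyhatm : Measurable yhat)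
    (hYval : ∀ ω, Y ω = 0 ∨ Y ω = 1) (hyhatval : ∀ ω, yhat ω = 0 ∨ yhat ω = 1)
    (A : Ω → α) (hAm : Measurable A)
    (pbar : ℝ)
    -- group-specific PPV exceeds p̄
    (hPPV : ∀ a, μ ({ω | yhat ω = 1} ∩ A ⁻¹' {a}) ≠ 0 →
      pbar ≤ (μ[|{ω | yhat ω = 1} ∩ A ⁻¹' {a}] {ω | Y ω = 1}).toReal)
    -- group-specific P(Y=1 | ŷ=0, A=a) is below p̄
    (hNPV : ∀ a, μ ({ω | yhat ω = 0} ∩ A ⁻¹' {a}) ≠ 0 →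
      (μ[|{ω | yhat ω = 0} ∩ A ⁻¹' {a}] {ω | Y ω = 1}).toReal < pbar)
    -- the score p̂(ŷ, A) = P(Y=1 | ŷ, A)
    (phat : Ω → ℝ)
    (hphat : phat = fun ω =>
      (μ[|{ω' | yhat ω' = yhat ω} ∩ {ω' | A ω' = A ω}] {ω' | Y ω' = 1}).toReal) :
    -- p̂ is calibrated within groups: E[Y | p̂ = r, A = a] = r
    (∀ r a, μ ({ω | phat ω = r} ∩ A ⁻¹' {a}) ≠ 0 →
      (μ[|{ω | phat ω = r} ∩ A ⁻¹' {a}] {ω | Y ω = 1}).toReal = r) ∧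
    -- ŷ = 1{p̂ ≥ p̄} almost surely
    (∀ᵐ ω ∂μ, yhat ω = if pbar ≤ phat ω then (1 : ℝ) else 0) := by
  classical
  set E : ℝ → α → Set Ω := fun v a => {ω | yhat ω = v} ∩ A ⁻¹' {a} with hEdef
  have hY1 : MeasurableSet {ω | Y ω = 1} := hYm (measurableSet_singleton 1)
  have hEm : ∀ (v : ℝ) a, MeasurableSet (E v a) := fun v a =>
    (hyhatm (measurableSet_singleton v)).inter (hAm (measurableSet_singleton a))
  -- formula for conditional probability
  have hcond : ∀ s : Set Ω, (μ[|s] {ω | Y ω = 1}).toReal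
      = (μ ({ω | Y ω = 1} ∩ s)).toReal / (μ s).toReal := by
    intro s
    rw [ProbabilityTheory.cond, Measure.smul_apply, Measure.restrict_apply hY1,
      smul_eq_mul, ENNReal.toReal_mul, ENNReal.toReal_inv]
    ring
  -- phat value
  have hphatval : ∀ ω, phat ω = (μ[|E (yhat ω) (A ω)] {ω' | Y ω' = 1}).toReal := by
    intro ω; rw [hphat]; rfl
  -- Step B: numerator identity
  have hB : ∀ (v : ℝ) a, (μ ({ω | Y ω = 1} ∩ E v a)).toReal
      = (μ[|E v a] {ω | Y ω = 1}).toReal * (μ (E v a)).toReal := by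
    intro v a
    by_cases h : μ (E v a) = 0
    · have h1 : μ ({ω | Y ω = 1} ∩ E v a) = 0 :=
        measure_mono_null Set.inter_subset_right h
      simp [h, h1]
    · rw [hcond, div_mul_cancel₀]
      exact ENNReal.toReal_ne_zero.mpr ⟨h, measure_ne_top μ _⟩
  -- Step A: decomposition of the level set of phat
  have hA2 : ∀ (r : ℝ) a, {ω | phat ω = r} ∩ A ⁻¹' {a}
      = (if (μ[|E 1 a] {ω | Y ω = 1}).toReal = r then E 1 a else ∅)
        ∪ (if (μ[|E 0 a] {ω | Y ω = 1}).toReal = r then E 0 a else ∅) := by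
    intro r a
    ext ω
    simp only [Set.mem_inter_iff, Set.mem_setOf_eq, Set.mem_preimage,
      Set.mem_singleton_iff, Set.mem_union]
    constructor
    · rintro ⟨hp, ha⟩
      have hv := hphatval ω
      rcases hyhatval ω with h0 | h1
      · right
        rw [h0, ha] at hv
        rw [if_pos (hv ▸ hp)]
        exact ⟨h0, ha⟩
      · left
        rw [h1, ha] at hv
        rw [if_pos (hv ▸ hp)]
        exact ⟨h1, ha⟩
    · rintro (h | h) <;> split_ifs at h with hs
      · obtain ⟨h1, ha⟩ := h
        refine ⟨?_, ha⟩
        rw [hphatval ω, h1, ha]; exact hs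
      · exact absurd h (Set.notMem_empty ω)
      · obtain ⟨h0, ha⟩ := h
        refine ⟨?_, ha⟩
        rw [hphatval ω, h0, ha]; exact hs
      · exact absurd h (Set.notMem_empty ω)
  refine ⟨?_, ?_⟩
  · -- calibration
    intro r a hS
    set S1 : Set Ω := if (μ[|E 1 a] {ω | Y ω = 1}).toReal = r then E 1 a else ∅ with hS1
    set S0 : Set Ω := if (μ[|E 0 a] {ω | Y ω = 1}).toReal = r then E 0 a else ∅ with hS0
    have hS1m : MeasurableSet S1 := by rw [hS1]; split_ifs; exacts [hEm 1 a, MeasurableSet.empty]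
    have hS0m : MeasurableSet S0 := by rw [hS0]; split_ifs; exacts [hEm 0 a, MeasurableSet.empty]
    have hdisj : Disjoint S1 S0 := by
      rw [Set.disjoint_left]
      intro ω h1 h0
      rw [hS1] at h1; rw [hS0] at h0
      split_ifs at h1 h0
      · have e1 : yhat ω = 1 := h1.1
        have e0 : yhat ω = 0 := h0.1
        rw [e1] at e0; norm_num at e0
      · exact h0
      · exact h1
      · exact h1
    -- numerator pieces
    have hN1 : (μ ({ω | Y ω = 1} ∩ S1)).toReal = r * (μ S1).toReal := by
      rw [hS1]; split_ifs with hs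
      · rw [hB, hs]
      · simp
    have hN0 : (μ ({ω | Y ω = 1} ∩ S0)).toReal = r * (μ S0).toReal := by
      rw [hS0]; split_ifs with hs
      · rw [hB, hs]
      · simp
    have hU : {ω | phat ω = r} ∩ A ⁻¹' {a} = S1 ∪ S0 := hA2 r a
    have hden : (μ (S1 ∪ S0)).toReal = (μ S1).toReal + (μ S0).toReal := by
      rw [measure_union hdisj hS0m, ENNReal.toReal_add (measure_ne_top μ _) (measure_ne_top μ _)]
    have hnum : (μ ({ω | Y ω = 1} ∩ (S1 ∪ S0))).toReal
        = r * (μ (S1 ∪ S0)).toReal := by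
      rw [Set.inter_union_distrib_left,
        measure_union (hdisj.mono Set.inter_subset_right Set.inter_subset_right)
          (hY1.inter hS0m),
        ENNReal.toReal_add (measure_ne_top μ _) (measure_ne_top μ _), hN1, hN0, hden]
      ring
    have hdne : (μ (S1 ∪ S0)).toReal ≠ 0 := by
      rw [← hU]
      exact ENNReal.toReal_ne_zero.mpr ⟨hS, measure_ne_top μ _⟩
    rw [hU, hcond, hnum, mul_div_assoc, div_self hdne, mul_one]
  · -- a.e. cutoff representation
    have hnull : ∀ a, μ ((if μ (E 0 a) = 0 then E 0 a else ∅)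
        ∪ (if μ (E 1 a) = 0 then E 1 a else ∅)) = 0 := by
      intro a
      apply measure_union_null <;> split_ifs with h <;> simp [h]
    have hN : μ (⋃ a, ((if μ (E 0 a) = 0 then E 0 a else ∅)
        ∪ (if μ (E 1 a) = 0 then E 1 a else ∅))) = 0 := measure_iUnion_null hnull
    rw [ae_iff]
    refine measure_mono_null ?_ hN
    intro ω hω
    by_contra hc
    simp only [Set.mem_iUnion, not_exists, Set.mem_union] at hc
    have hca := hc (A ω)
    rcases hyhatval ω with h0 | h1
    · have hne : μ (E 0 (A ω)) ≠ 0 := by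
        intro h
        exact hca (Or.inl (by rw [if_pos h]; exact ⟨h0, rfl⟩))
      have hlt := hNPV (A ω) hne
      apply hω
      rw [hphatval ω, h0]
      rw [if_neg (not_le.mpr hlt)]
    · have hne : μ (E 1 (A ω)) ≠ 0 := by
        intro h
        exact hca (Or.inr (by rw [if_pos h]; exact ⟨h1, rfl⟩))
      have hge := hPPV (A ω) hne
      apply hω
      rw [hphatval ω, h1]
      rw [if_pos hge]
end

section
/- Let Y, A, Z be discrete random variables with Y ∈ {0,1}, A ∈ {0,1}, satisfying: Y ⊥ A | Z and Z ⊥ A | Y. Let ε ∈ (0,1) and let η be Bernoulli(ε), independent of (Z, A, Y), and define A_η = A + η (mod 2). Then the triple (Z, A_η, Y) also satisfies Y ⊥ A_η | Z and Z ⊥ A_η | Y, and moreover P(A_η = 1 | Z = z) ∈ (0,1) for every z in the support of Z. -/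
open MeasureTheory ProbabilityTheory


lemma xor_eq_iff' (b c a : Bool) : xor b c = a ↔ (b = a ∧ c = false) ∨ (b = !a ∧ c = true) := by
  cases b <;> cases c <;> cases a <;> simp

lemma flip_split_aux {Ω : Type*} (A η : Ω → Bool) (W : Set Ω) (a : Bool) :
    W ∩ (fun ω => xor (A ω) (η ω)) ⁻¹' {a} =
      (W ∩ A ⁻¹' {a}) ∩ η ⁻¹' {false} ∪ (W ∩ A ⁻¹' {!a}) ∩ η ⁻¹' {true} := by
  ext ω
  simp only [Set.mem_inter_iff, Set.mem_union, Set.mem_preimage, Set.mem_singleton_iff,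
    xor_eq_iff']
  tauto

lemma key_split {Ω γ : Type*} [MeasurableSpace Ω] (μ : Measure Ω) [IsProbabilityMeasure μ]
    [MeasurableSpace γ] [MeasurableSingletonClass γ] [Countable γ]
    (Y A η : Ω → Bool) (Z : Ω → γ)
    (hY : Measurable Y) (hA : Measurable A) (hη : Measurable η) (hZ : Measurable Z)
    (hηind : IndepFun η (fun ω => (Z ω, A ω, Y ω)) μ)
    (T : Set (γ × Bool × Bool)) (a : Bool) :
    μ ((fun ω => (Z ω, A ω, Y ω)) ⁻¹' T ∩ (fun ω => xor (A ω) (η ω)) ⁻¹' {a}) =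
      μ ((fun ω => (Z ω, A ω, Y ω)) ⁻¹' T ∩ A ⁻¹' {a}) * μ (η ⁻¹' {false}) +
      μ ((fun ω => (Z ω, A ω, Y ω)) ⁻¹' T ∩ A ⁻¹' {!a}) * μ (η ⁻¹' {true}) := by
  have hmeas : ∀ (T' : Set (γ × Bool × Bool)), MeasurableSet T' :=
    fun T' => T'.to_countable.measurableSet
  have hTA : ∀ b : Bool, (fun ω => (Z ω, A ω, Y ω)) ⁻¹' T ∩ A ⁻¹' {b} =
      (fun ω => (Z ω, A ω, Y ω)) ⁻¹' (T ∩ {p | p.2.1 = b}) := by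
    intro b; ext ω; simp [Set.mem_preimage]
  have hind : ∀ (T' : Set (γ × Bool × Bool)) (c : Bool),
      μ ((fun ω => (Z ω, A ω, Y ω)) ⁻¹' T' ∩ η ⁻¹' {c}) =
        μ ((fun ω => (Z ω, A ω, Y ω)) ⁻¹' T') * μ (η ⁻¹' {c}) := by
    intro T' c
    rw [Set.inter_comm, hηind.measure_inter_preimage_eq_mul _ _ (measurableSet_singleton c)
      (hmeas T'), mul_comm]
  rw [flip_split_aux, hTA a, hTA (!a), measure_union, hind, hind]
  · exact Set.disjoint_left.2 (by rintro ω ⟨-, h1⟩ ⟨-, h2⟩; simp_all)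
  · exact ((hmeas _).preimage (hZ.prodMk (hA.prodMk hY))).inter (hη (measurableSet_singleton _))

lemma cond_key {Ω γ : Type*} [MeasurableSpace Ω] (μ : Measure Ω) [IsProbabilityMeasure μ]
    [MeasurableSpace γ] [MeasurableSingletonClass γ] [Countable γ]
    (Y A η : Ω → Bool) (Z : Ω → γ)
    (hY : Measurable Y) (hA : Measurable A) (hη : Measurable η) (hZ : Measurable Z)
    (hηind : IndepFun η (fun ω => (Z ω, A ω, Y ω)) μ)
    (TS TW : Set (γ × Bool × Bool)) (a : Bool) :
    μ[|(fun ω => (Z ω, A ω, Y ω)) ⁻¹' TS]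
        ((fun ω => (Z ω, A ω, Y ω)) ⁻¹' TW ∩ (fun ω => xor (A ω) (η ω)) ⁻¹' {a}) =
      μ[|(fun ω => (Z ω, A ω, Y ω)) ⁻¹' TS]
          ((fun ω => (Z ω, A ω, Y ω)) ⁻¹' TW ∩ A ⁻¹' {a}) * μ (η ⁻¹' {false}) +
      μ[|(fun ω => (Z ω, A ω, Y ω)) ⁻¹' TS]
          ((fun ω => (Z ω, A ω, Y ω)) ⁻¹' TW ∩ A ⁻¹' {!a}) * μ (η ⁻¹' {true}) := by
  set f := fun ω => (Z ω, A ω, Y ω) with hf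
  have hfm : Measurable f := hZ.prodMk (hA.prodMk hY)
  have hmT : ∀ (T : Set (γ × Bool × Bool)), MeasurableSet T :=
    fun T => T.to_countable.measurableSet
  have hSm : MeasurableSet (f ⁻¹' TS) := (hmT TS).preimage hfm
  have hint : ∀ (s : Set Ω), f ⁻¹' TS ∩ (f ⁻¹' TW ∩ s) = f ⁻¹' (TS ∩ TW) ∩ s := by
    intro s; rw [Set.preimage_inter]; exact (Set.inter_assoc _ _ _).symm
  rw [cond_apply hSm, cond_apply hSm, cond_apply hSm, hint, hint, hint,
    key_split μ Y A η Z hY hA hη hZ hηind (TS ∩ TW) a]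
  ring

/-- Perturbation lemma: flipping the group label A with an
independent Bernoulli(ε) coin η preserves both conditional independence
conditions Y ⟂ A_η | Z and Z ⟂ A_η | Y, and makes A_η non-degenerate
conditionally on Z: P(A_η = 1 | Z = z) ∈ (0, 1) on the support of Z. -/
theorem flip_preserves_fairness_conditions
    {Ω γ : Type*} [MeasurableSpace Ω] (μ : Measure Ω) [IsProbabilityMeasure μ]
    [MeasurableSpace γ] [MeasurableSingletonClass γ] [Countable γ]
    (Y A η : Ω → Bool) (Z : Ω → γ)
    (hY : Measurable Y) (hA : Measurable A) (hη : Measurable η) (hZ : Measurable Z)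
    (ε : ℝ) (hε : ε ∈ Set.Ioo (0 : ℝ) 1)
    -- η is Bernoulli(ε), independent of (Z, A, Y)
    (hηind : IndepFun η (fun ω => (Z ω, A ω, Y ω)) μ)
    (hηlaw : μ (η ⁻¹' {true}) = ENNReal.ofReal ε)
    -- Y ⟂ A | Z
    (hYA_Z : ∀ z, μ (Z ⁻¹' {z}) ≠ 0 → ∀ y a,
      μ[|Z ⁻¹' {z}] (Y ⁻¹' {y} ∩ A ⁻¹' {a}) =
        μ[|Z ⁻¹' {z}] (Y ⁻¹' {y}) * μ[|Z ⁻¹' {z}] (A ⁻¹' {a}))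
    -- Z ⟂ A | Y
    (hZA_Y : ∀ y, μ (Y ⁻¹' {y}) ≠ 0 → ∀ z a,
      μ[|Y ⁻¹' {y}] (Z ⁻¹' {z} ∩ A ⁻¹' {a}) =
        μ[|Y ⁻¹' {y}] (Z ⁻¹' {z}) * μ[|Y ⁻¹' {y}] (A ⁻¹' {a})) :
    -- conclusions for A_η = A xor η
    (∀ z, μ (Z ⁻¹' {z}) ≠ 0 → ∀ y a,
      μ[|Z ⁻¹' {z}] (Y ⁻¹' {y} ∩ (fun ω => xor (A ω) (η ω)) ⁻¹' {a}) =
        μ[|Z ⁻¹' {z}] (Y ⁻¹' {y}) *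
          μ[|Z ⁻¹' {z}] ((fun ω => xor (A ω) (η ω)) ⁻¹' {a})) ∧
    (∀ y, μ (Y ⁻¹' {y}) ≠ 0 → ∀ z a,
      μ[|Y ⁻¹' {y}] (Z ⁻¹' {z} ∩ (fun ω => xor (A ω) (η ω)) ⁻¹' {a}) =
        μ[|Y ⁻¹' {y}] (Z ⁻¹' {z}) *
          μ[|Y ⁻¹' {y}] ((fun ω => xor (A ω) (η ω)) ⁻¹' {a})) ∧
    (∀ z, μ (Z ⁻¹' {z}) ≠ 0 →
      0 < μ[|Z ⁻¹' {z}] ((fun ω => xor (A ω) (η ω)) ⁻¹' {true}) ∧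
        μ[|Z ⁻¹' {z}] ((fun ω => xor (A ω) (η ω)) ⁻¹' {true}) < 1) := by
  set f := fun ω => (Z ω, A ω, Y ω) with hf
  set X := fun ω => xor (A ω) (η ω) with hX
  set p := μ (η ⁻¹' {true}) with hp
  set q := μ (η ⁻¹' {false}) with hq
  have eZ : ∀ z : γ, Z ⁻¹' {z} = f ⁻¹' {w | w.1 = z} := by
    intro z; ext ω; simp [hf]
  have eY : ∀ y : Bool, Y ⁻¹' {y} = f ⁻¹' {w | w.2.2 = y} := by
    intro y; ext ω; simp [hf]
  have eU : (Set.univ : Set Ω) = f ⁻¹' Set.univ := by simp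
  -- master expansion
  have master : ∀ (TS : Set (γ × Bool × Bool)) (W : Set Ω) (TW : Set (γ × Bool × Bool))
      (_ : W = f ⁻¹' TW) (a : Bool),
      μ[|f ⁻¹' TS] (W ∩ X ⁻¹' {a}) =
        μ[|f ⁻¹' TS] (W ∩ A ⁻¹' {a}) * q + μ[|f ⁻¹' TS] (W ∩ A ⁻¹' {!a}) * p := by
    intro TS W TW hW a
    rw [hW]
    exact cond_key μ Y A η Z hY hA hη hZ hηind TS TW a
  have masterX : ∀ (TS : Set (γ × Bool × Bool)) (a : Bool),
      μ[|f ⁻¹' TS] (X ⁻¹' {a}) =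
        μ[|f ⁻¹' TS] (A ⁻¹' {a}) * q + μ[|f ⁻¹' TS] (A ⁻¹' {!a}) * p := by
    intro TS a
    have := master TS Set.univ Set.univ eU a
    simpa using this
  refine ⟨?_, ?_, ?_⟩
  · intro z hz y a
    rw [eZ z] at hz ⊢
    rw [master _ (Y ⁻¹' {y}) _ (eY y) a, masterX]
    have h1 := hYA_Z z (by rw [eZ z] at *; exact hz) y a
    have h2 := hYA_Z z (by rw [eZ z] at *; exact hz) y (!a)
    rw [eZ z] at h1 h2
    rw [h1, h2]; ring
  · intro y hy z a
    rw [eY y] at hy ⊢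
    rw [master _ (Z ⁻¹' {z}) _ (eZ z) a, masterX]
    have h1 := hZA_Y y (by rw [eY y] at *; exact hy) z a
    have h2 := hZA_Y y (by rw [eY y] at *; exact hy) z (!a)
    rw [eY y] at h1 h2
    rw [h1, h2]; ring
  · intro z hz
    have hpe : p = ENNReal.ofReal ε := hηlaw
    have hp0 : p ≠ 0 := by rw [hpe]; exact (ENNReal.ofReal_pos.mpr hε.1).ne'
    have hp1 : p < 1 := by rw [hpe]; exact ENNReal.ofReal_lt_one.mpr hε.2
    have hqe : q = 1 - p := by
      rw [hq, hp]
      have : η ⁻¹' {false} = (η ⁻¹' {true})ᶜ := by ext ω; simp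
      rw [this, prob_compl_eq_one_sub (hη (measurableSet_singleton true))]
    have hq0 : q ≠ 0 := by
      rw [hqe]; exact (tsub_pos_of_lt hp1).ne'
    have hq1 : q < 1 := by
      rw [hqe]; exact ENNReal.sub_lt_self ENNReal.one_ne_top one_ne_zero hp0
    have hprob : IsProbabilityMeasure (μ[|Z ⁻¹' {z}]) :=
      cond_isProbabilityMeasure hz
    set c := μ[|Z ⁻¹' {z}] with hc
    have key : c (X ⁻¹' {true}) = c (A ⁻¹' {true}) * q + c (A ⁻¹' {false}) * p := by
      rw [hc, eZ z]
      simpa using masterX {w | w.1 = z} true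
    set x := c (A ⁻¹' {true}) with hx
    have hcompl : A ⁻¹' {false} = (A ⁻¹' {true})ᶜ := by ext ω; simp
    have hxf : c (A ⁻¹' {false}) = 1 - x := by
      rw [hcompl, prob_compl_eq_one_sub (hA (measurableSet_singleton true))]
    have hx1 : x ≤ 1 := prob_le_one
    rw [key, hxf]
    constructor
    · rcases eq_or_ne x 0 with h0 | h0
      · simp only [h0, zero_mul, zero_add, tsub_zero, one_mul]
        exact pos_iff_ne_zero.mpr hp0
      · calc (0 : ENNReal) < x * q := by
              exact pos_iff_ne_zero.mpr (mul_ne_zero h0 hq0)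
          _ ≤ x * q + (1 - x) * p := le_self_add
    · have hM : max q p < 1 := max_lt hq1 hp1
      calc x * q + (1 - x) * p ≤ x * max q p + (1 - x) * max q p :=
            add_le_add (mul_le_mul_right (le_max_left _ _) x)
              (mul_le_mul_right (le_max_right _ _) _)
        _ = (x + (1 - x)) * max q p := (add_mul _ _ _).symm
        _ = 1 * max q p := by rw [add_tsub_cancel_of_le hx1]
        _ = max q p := one_mul _
        _ < 1 := hM
end
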